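/- For all z ≥ 0, z(2+z²)Φ(z)(1-Φ(z)) ≥ (1+z²)(2Φ(z)-1)φ(z), where Φ and φ are the standard normal CDF and PDF. -/

import Mathlib

open Real Set Filter Topology

noncomputable def phi (y : ℝ) : ℝ := (Real.sqrt (2 * Real.pi))⁻¹ * Real.exp (-y ^ 2 / 2)

noncomputable def Phi (x : ℝ) : ℝ := ∫ y in Set.Iic x, phi y

noncomputable def PhiInv (a : ℝ) : ℝ := Function.invFun Phi a

lemma phi_eq (y : ℝ) : phi y = (Real.sqrt (2 * Real.pi))⁻¹ * Real.exp (-(1/2) * y ^ 2) := by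
  rw [phi]; ring_nf

lemma sqrt_two_pi_pos : 0 < Real.sqrt (2 * Real.pi) :=
  Real.sqrt_pos.2 (by positivity)

lemma phi_pos (y : ℝ) : 0 < phi y := by
  rw [phi]; positivity

lemma phi_cont : Continuous phi := by
  unfold phi; fun_prop

lemma phi_integrable : MeasureTheory.Integrable phi := by
  have h := (integrable_exp_neg_mul_sq (by norm_num : (0:ℝ) < 1/2)).const_mul
    (Real.sqrt (2 * Real.pi))⁻¹
  apply h.congr
  filter_upwards with y
  rw [phi_eq]

lemma integral_phi : ∫ y, phi y = 1 := by
  have h : ∫ y, phi y = (Real.sqrt (2 * Real.pi))⁻¹ * ∫ y : ℝ, Real.exp (-(1/2) * y ^ 2) := by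
    rw [← MeasureTheory.integral_const_mul]
    congr 1; funext y; rw [phi_eq]
  rw [h, integral_gaussian]
  have : Real.pi / (1/2) = 2 * Real.pi := by ring
  rw [this, inv_mul_cancel₀ (ne_of_gt sqrt_two_pi_pos)]

lemma one_sub_Phi (z : ℝ) : 1 - Phi z = ∫ y in Set.Ioi z, phi y := by
  have := intervalIntegral.integral_Iic_add_Ioi (b := z)
    phi_integrable.integrableOn phi_integrable.integrableOn
  rw [integral_phi] at this
  rw [Phi]; linarith

lemma Phi_zero : Phi 0 = 1/2 := by
  have h1 : (∫ x in Set.Iic (0:ℝ), phi (-x)) = ∫ x in Set.Ioi (-(0:ℝ)), phi x :=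
    integral_comp_neg_Iic 0 phi
  have h2 : ∀ x : ℝ, phi (-x) = phi x := by
    intro x; rw [phi, phi]; ring_nf
  simp only [h2, neg_zero] at h1
  have h3 := one_sub_Phi 0
  rw [Phi] at *
  rw [h1] at h3
  linarith

lemma Phi_nonneg (x : ℝ) : 0 ≤ Phi x :=
  MeasureTheory.setIntegral_nonneg measurableSet_Iic (fun y _ => (phi_pos y).le)

lemma Phi_eq_half_add (z : ℝ) : Phi z = 1/2 + ∫ t in (0:ℝ)..z, phi t := by
  have := intervalIntegral.integral_Iic_sub_Iic (f := phi) (μ := MeasureTheory.volume)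
    (a := (0:ℝ)) (b := z) phi_integrable.integrableOn phi_integrable.integrableOn
  rw [← Phi, ← Phi, Phi_zero] at this
  linarith

lemma hasDerivAt_phi (t : ℝ) : HasDerivAt phi (-t * phi t) t := by
  have h1 : HasDerivAt (fun y : ℝ => -y ^ 2 / 2) (-t) t := by
    have := ((hasDerivAt_pow 2 t).neg).div_const 2
    refine this.congr_deriv ?_
    simp; ring
  have h2 := (h1.exp).const_mul (Real.sqrt (2 * Real.pi))⁻¹
  refine h2.congr_deriv ?_
  rw [phi]; ring

/-- key tail bound: (1 - Phi z) * (z^4+6z^2+3) ≥ (z^3+5z) * phi z for z ≥ 0 -/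
lemma tail_bound (z : ℝ) (hz : 0 ≤ z) :
    (z^3 + 5*z) * phi z ≤ (1 - Phi z) * (z^4 + 6*z^2 + 3) := by
  set D : ℝ → ℝ := fun t => t^4 + 6*t^2 + 3 with hD
  have hDpos : ∀ t : ℝ, 0 < D t := by intro t; simp only [hD]; nlinarith [sq_nonneg (t^2), sq_nonneg t, sq_nonneg (t^2-1)]
  set G : ℝ → ℝ := fun t => -((t^3 + 5*t) / D t * phi t) with hG
  set g : ℝ → ℝ := fun t => (1 - 24 / (D t)^2) * phi t with hg
  -- derivative
  have hderiv : ∀ t : ℝ, HasDerivAt G (g t) t := by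
    intro t
    have hN : HasDerivAt (fun t : ℝ => t^3 + 5*t) (3*t^2 + 5) t := by
      have := (hasDerivAt_pow 3 t).add ((hasDerivAt_id t).const_mul 5)
      refine this.congr_deriv ?_; ring
    have hDd : HasDerivAt D (4*t^3 + 12*t) t := by
      have := ((hasDerivAt_pow 4 t).add (((hasDerivAt_pow 2 t)).const_mul 6)).add_const 3
      refine this.congr_deriv ?_; ring
    have hq := (hN.div hDd (ne_of_gt (hDpos t)))
    have := ((hq.mul (hasDerivAt_phi t)).neg)
    refine this.congr_deriv ?_
    have h2 : D t ≠ 0 := ne_of_gt (hDpos t)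
    simp only [hg, hD, Pi.div_apply] at *
    field_simp
    ring
  -- tendsto 0
  have hphi_lim : Tendsto phi atTop (𝓝 0) := by
    have h1 : Tendsto (fun t : ℝ => -t^2/2) atTop atBot := by
      apply Tendsto.atBot_div_const (by norm_num)
      exact tendsto_neg_atBot_iff.mpr (tendsto_pow_atTop (by norm_num))
    have h2 := (Real.tendsto_exp_atBot.comp h1).const_mul (Real.sqrt (2 * Real.pi))⁻¹
    rw [mul_zero] at h2
    exact h2.congr (fun t => by simp only [Function.comp_apply]; rw [phi])
  have hG_lim : Tendsto G atTop (𝓝 0) := by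
    apply squeeze_zero_norm' _ hphi_lim
    filter_upwards [eventually_ge_atTop (1:ℝ)] with t ht
    have hDt := hDpos t
    have ht0 : (0:ℝ) < t := lt_of_lt_of_le one_pos ht
    have hN_nonneg : 0 ≤ t^3 + 5*t := by nlinarith [pow_pos ht0 3]
    have hND : t^3 + 5*t ≤ D t := by simp only [hD]; nlinarith
    have hr1 : (t^3 + 5*t) / D t ≤ 1 := by rw [div_le_one hDt]; exact hND
    have hr0 : 0 ≤ (t^3 + 5*t) / D t := div_nonneg hN_nonneg hDt.le
    have := phi_pos t
    rw [hG]
    simp only [norm_neg, Real.norm_eq_abs]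
    rw [abs_of_nonneg (by positivity)]
    calc (t^3 + 5*t) / D t * phi t ≤ 1 * phi t := by
          apply mul_le_mul_of_nonneg_right hr1 (phi_pos t).le
      _ = phi t := by ring
  -- integrability of g on Ioi z
  have hg_int : MeasureTheory.IntegrableOn g (Set.Ioi z) := by
    apply MeasureTheory.Integrable.integrableOn
    apply MeasureTheory.Integrable.mono (phi_integrable.const_mul (5/3))
    · apply Continuous.aestronglyMeasurable
      apply Continuous.mul _ phi_cont
      have : Continuous fun t : ℝ => (D t)^2 := by fun_prop
      fun_prop (disch := intro t; exact pow_ne_zero 2 (ne_of_gt (hDpos t)))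
    · filter_upwards with t
      have h9 : (9:ℝ) ≤ (D t)^2 := by
        have h3 : (3:ℝ) ≤ D t := by simp only [hD]; nlinarith [sq_nonneg t, sq_nonneg (t^2)]
        nlinarith
      have hb : |1 - 24 / (D t)^2| ≤ 5/3 := by
        rw [abs_le]
        have h1 : 24 / (D t)^2 ≤ 24/9 := by
          apply div_le_div_of_nonneg_left (by norm_num) (by norm_num) h9
        have h2 : 0 ≤ 24 / (D t)^2 := by positivity
        constructor <;> nlinarith
      simp only [hg, Real.norm_eq_abs, abs_mul]
      rw [abs_of_nonneg (phi_pos t).le, abs_of_nonneg (by norm_num : (0:ℝ) ≤ (5:ℝ)/3)]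
      exact mul_le_mul_of_nonneg_right hb (phi_pos t).le
  -- FTC on Ioi
  have hFTC : ∫ t in Set.Ioi z, g t = 0 - G z :=
    MeasureTheory.integral_Ioi_of_hasDerivAt_of_tendsto' (fun x _ => hderiv x) hg_int hG_lim
  -- compare with phi
  have hmono : ∫ t in Set.Ioi z, g t ≤ ∫ t in Set.Ioi z, phi t := by
    apply MeasureTheory.setIntegral_mono_on hg_int phi_integrable.integrableOn measurableSet_Ioi
    intro t _
    simp only [hg]
    have h2 : 0 ≤ 24 / (D t)^2 := by positivity
    nlinarith [phi_pos t]
  rw [hFTC, ← one_sub_Phi] at hmono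
  simp only [hG, zero_sub, neg_neg] at hmono
  rw [div_mul_eq_mul_div, div_le_iff₀ (hDpos z)] at hmono
  exact hmono

lemma exp_upper (x : ℝ) (h0 : 0 ≤ x) (h32 : x ≤ 3/2) :
    Real.exp (-x) ≤ 1 - x + x^2/2 - x^3/6 + x^4/24 - x^5/120 + x^6/720 := by
  have hTexp : (1 + x + x^2/2 + x^3/6 + x^4/24 + x^5/120 + x^6/720 + x^7/5040) ≤ Real.exp x := by
    have := Real.sum_le_exp_of_nonneg h0 8
    simp [Finset.sum_range_succ, Nat.factorial] at this
    linarith [this]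
  have hTpos : (0:ℝ) < 1 + x + x^2/2 + x^3/6 + x^4/24 + x^5/120 + x^6/720 + x^7/5040 := by positivity
  have hx2 : 0 ≤ 3/2 - x := by linarith
  have hkey : 1 ≤ (1 + x + x^2/2 + x^3/6 + x^4/24 + x^5/120 + x^6/720 + x^7/5040) *
      (1 - x + x^2/2 - x^3/6 + x^4/24 - x^5/120 + x^6/720) := by
    nlinarith [mul_nonneg (mul_nonneg (by norm_num : (0:ℝ) ≤ 4/229635) (pow_nonneg h0 7)) (pow_nonneg hx2 6),
      mul_nonneg (mul_nonneg (by norm_num : (0:ℝ) ≤ 19/153090) (pow_nonneg h0 8)) (pow_nonneg hx2 5),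
      mul_nonneg (mul_nonneg (by norm_num : (0:ℝ) ≤ 29/76545) (pow_nonneg h0 9)) (pow_nonneg hx2 4),
      mul_nonneg (mul_nonneg (by norm_num : (0:ℝ) ≤ 1439/2296350) (pow_nonneg h0 10)) (pow_nonneg hx2 3),
      mul_nonneg (mul_nonneg (by norm_num : (0:ℝ) ≤ 7229/12247200) (pow_nonneg h0 11)) (pow_nonneg hx2 2),
      mul_nonneg (mul_nonneg (by norm_num : (0:ℝ) ≤ 2941/9797760) (pow_nonneg h0 12)) (pow_nonneg hx2 1),
      mul_nonneg (by norm_num : (0:ℝ) ≤ 19007/293932800) (pow_nonneg h0 13)]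
  have hinv : Real.exp (-x) ≤ (1 + x + x^2/2 + x^3/6 + x^4/24 + x^5/120 + x^6/720 + x^7/5040)⁻¹ := by
    rw [Real.exp_neg]
    exact inv_anti₀ hTpos hTexp
  have hTS : (1 + x + x^2/2 + x^3/6 + x^4/24 + x^5/120 + x^6/720 + x^7/5040)⁻¹ ≤
      1 - x + x^2/2 - x^3/6 + x^4/24 - x^5/120 + x^6/720 := by
    rw [inv_eq_one_div, div_le_iff₀ hTpos]
    nlinarith
  linarith

lemma phi_upper (t : ℝ) (h : t^2 ≤ 3) :
    phi t ≤ (Real.sqrt (2 * Real.pi))⁻¹ *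
      (1 - t^2/2 + t^4/8 - t^6/48 + t^8/384 - t^10/3840 + t^12/46080) := by
  have h0 : (0:ℝ) ≤ t^2/2 := by positivity
  have h32 : t^2/2 ≤ 3/2 := by linarith
  have he := exp_upper (t^2/2) h0 h32
  have hrw : Real.exp (-t^2/2) = Real.exp (-(t^2/2)) := by norm_num [neg_div]
  have hc : (0:ℝ) ≤ (Real.sqrt (2 * Real.pi))⁻¹ := by positivity
  calc phi t = (Real.sqrt (2 * Real.pi))⁻¹ * Real.exp (-(t^2/2)) := by rw [phi, ← hrw]
    _ ≤ (Real.sqrt (2 * Real.pi))⁻¹ *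
        (1 - (t^2/2) + (t^2/2)^2/2 - (t^2/2)^3/6 + (t^2/2)^4/24 - (t^2/2)^5/120 + (t^2/2)^6/720) :=
      mul_le_mul_of_nonneg_left he hc
    _ = (Real.sqrt (2 * Real.pi))⁻¹ *
        (1 - t^2/2 + t^4/8 - t^6/48 + t^8/384 - t^10/3840 + t^12/46080) := by ring

lemma integral_phi_upper (z : ℝ) (hz : 0 ≤ z) (h3 : z^2 ≤ 3) :
    (∫ t in (0:ℝ)..z, phi t) ≤ (Real.sqrt (2 * Real.pi))⁻¹ *
      (z - z^3/6 + z^5/40 - z^7/336 + z^9/3456 - z^11/42240 + z^13/599040) := by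
  set c := (Real.sqrt (2 * Real.pi))⁻¹ with hc
  have hc0 : (0:ℝ) ≤ c := by rw [hc]; positivity
  set Pp : ℝ → ℝ := fun t => c * (1 - t^2/2 + t^4/8 - t^6/48 + t^8/384 - t^10/3840 + t^12/46080) with hPp
  have hScont : Continuous Pp := by fun_prop
  have hmono : (∫ t in (0:ℝ)..z, phi t) ≤ ∫ t in (0:ℝ)..z, Pp t := by
    apply intervalIntegral.integral_mono_on hz
      (phi_cont.intervalIntegrable 0 z) (hScont.intervalIntegrable 0 z)
    intro t ht
    have ht2 : t^2 ≤ 3 := by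
      have h1 : t^2 ≤ z^2 := pow_le_pow_left₀ ht.1 ht.2 2
      linarith
    exact phi_upper t ht2
  have hanti : ∀ u : ℝ, HasDerivAt
      (fun u : ℝ => c * (u - u^3/6 + u^5/40 - u^7/336 + u^9/3456 - u^11/42240 + u^13/599040))
      (Pp u) u := by
    intro u
    have h1 : HasDerivAt (fun u : ℝ => u - u^3/6 + u^5/40 - u^7/336 + u^9/3456 - u^11/42240 + u^13/599040)
        (1 - u^2/2 + u^4/8 - u^6/48 + u^8/384 - u^10/3840 + u^12/46080) u := by
      have h := (((((((hasDerivAt_id u).sub ((hasDerivAt_pow 3 u).div_const 6)).add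
        ((hasDerivAt_pow 5 u).div_const 40)).sub ((hasDerivAt_pow 7 u).div_const 336)).add
        ((hasDerivAt_pow 9 u).div_const 3456)).sub ((hasDerivAt_pow 11 u).div_const 42240)).add
        ((hasDerivAt_pow 13 u).div_const 599040))
      refine h.congr_deriv ?_
      norm_num
      ring
    exact h1.const_mul c
  have hcalc : (∫ t in (0:ℝ)..z, Pp t)
      = c * (z - z^3/6 + z^5/40 - z^7/336 + z^9/3456 - z^11/42240 + z^13/599040) := by
    rw [intervalIntegral.integral_eq_sub_of_hasDerivAt (fun u _ => hanti u)
      (hScont.intervalIntegrable 0 z)]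
    norm_num
  rw [hcalc] at hmono
  exact hmono

set_option maxHeartbeats 2000000 in
theorem mills_type_inequality (z : ℝ) (hz : 0 ≤ z) :
    z * (2 + z ^ 2) * Phi z * (1 - Phi z) ≥ (1 + z ^ 2) * (2 * Phi z - 1) * phi z := by
  have hphi := phi_pos z
  have hP := Phi_nonneg z
  by_cases h3 : z^2 ≤ 3
  · -- small z case
    obtain ⟨c, hc0, hc2, hphiub, hIc⟩ : ∃ c : ℝ, 0 < c ∧ c^2 * (2 * Real.pi) = 1 ∧
        phi z ≤ c * (1 - z^2/2 + z^4/8 - z^6/48 + z^8/384 - z^10/3840 + z^12/46080) ∧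
        (∫ t in (0:ℝ)..z, phi t) ≤
          c * (z - z^3/6 + z^5/40 - z^7/336 + z^9/3456 - z^11/42240 + z^13/599040) := by
      refine ⟨(Real.sqrt (2 * Real.pi))⁻¹, by positivity, ?_, phi_upper z h3,
        integral_phi_upper z hz h3⟩
      rw [inv_pow, Real.sq_sqrt (by positivity : (0:ℝ) ≤ 2*Real.pi),
        inv_mul_cancel₀ (by positivity)]
    obtain ⟨J, hI0, hIub, hPhi⟩ : ∃ J : ℝ, 0 ≤ J ∧
        J ≤ c * (z - z^3/6 + z^5/40 - z^7/336 + z^9/3456 - z^11/42240 + z^13/599040) ∧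
        Phi z = 1/2 + J :=
      ⟨∫ t in (0:ℝ)..z, phi t,
        intervalIntegral.integral_nonneg hz (fun t _ => (phi_pos t).le), hIc, Phi_eq_half_add z⟩
    have hpi : (3141592/1000000 : ℝ) < Real.pi := by
      have := Real.pi_gt_d6
      norm_num at this ⊢
      linarith
    -- abbreviations for the polynomial bounds
    have hSnn : 0 ≤ c * (z - z^3/6 + z^5/40 - z^7/336 + z^9/3456 - z^11/42240 + z^13/599040) :=
      le_trans hI0 hIub
    have hSz : 0 ≤ z - z^3/6 + z^5/40 - z^7/336 + z^9/3456 - z^11/42240 + z^13/599040 := by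
      have := (mul_le_mul_iff_right₀ hc0).mp (by linarith [hSnn] :
        c * 0 ≤ c * (z - z^3/6 + z^5/40 - z^7/336 + z^9/3456 - z^11/42240 + z^13/599040))
      linarith
    -- polynomial certificate
    have h30 : (0:ℝ) ≤ 3 - z^2 := by linarith
    have hPz0 : (0:ℝ) ≤ (1 - z^2/2 + z^4/8 - z^6/48 + z^8/384 - z^10/3840 + z^12/46080) := by
      have := (mul_le_mul_iff_right₀ hc0).mp (by linarith [hphi.le, hphiub] :
        c * 0 ≤ c * (1 - z^2/2 + z^4/8 - z^6/48 + z^8/384 - z^10/3840 + z^12/46080))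
      linarith
    have h1 : J^2 ≤ c^2 * (z - z^3/6 + z^5/40 - z^7/336 + z^9/3456 - z^11/42240 + z^13/599040)^2 := by
      have h := pow_le_pow_left₀ hI0 hIub 2
      have e : (c * (z - z^3/6 + z^5/40 - z^7/336 + z^9/3456 - z^11/42240 + z^13/599040))^2 = c^2 * (z - z^3/6 + z^5/40 - z^7/336 + z^9/3456 - z^11/42240 + z^13/599040)^2 := by ring
      rw [e] at h
      exact h
    have h2 : J * phi z ≤ c^2 * ((z - z^3/6 + z^5/40 - z^7/336 + z^9/3456 - z^11/42240 + z^13/599040) * (1 - z^2/2 + z^4/8 - z^6/48 + z^8/384 - z^10/3840 + z^12/46080)) := by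
      have h := mul_le_mul hIub hphiub hphi.le hSnn
      have e : c * (z - z^3/6 + z^5/40 - z^7/336 + z^9/3456 - z^11/42240 + z^13/599040) * (c * (1 - z^2/2 + z^4/8 - z^6/48 + z^8/384 - z^10/3840 + z^12/46080)) = c^2 * ((z - z^3/6 + z^5/40 - z^7/336 + z^9/3456 - z^11/42240 + z^13/599040) * (1 - z^2/2 + z^4/8 - z^6/48 + z^8/384 - z^10/3840 + z^12/46080)) := by ring
      rw [e] at h
      exact h
    have hA1 : z*(2+z^2)*J^2 ≤ z*(2+z^2)*(c^2 * (z - z^3/6 + z^5/40 - z^7/336 + z^9/3456 - z^11/42240 + z^13/599040)^2) :=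
      mul_le_mul_of_nonneg_left h1 (by positivity)
    have hA2 : 2*(1+z^2)*(J*phi z) ≤ 2*(1+z^2)*(c^2 * ((z - z^3/6 + z^5/40 - z^7/336 + z^9/3456 - z^11/42240 + z^13/599040)*(1 - z^2/2 + z^4/8 - z^6/48 + z^8/384 - z^10/3840 + z^12/46080))) :=
      mul_le_mul_of_nonneg_left h2 (by positivity)
    have cert : (3141592/1000000 : ℝ) * (z*(2+z^2))/2 - (z*(2+z^2))*(z - z^3/6 + z^5/40 - z^7/336 + z^9/3456 - z^11/42240 + z^13/599040)^2
        - 2*(1+z^2)*((z - z^3/6 + z^5/40 - z^7/336 + z^9/3456 - z^11/42240 + z^13/599040)*(1 - z^2/2 + z^4/8 - z^6/48 + z^8/384 - z^10/3840 + z^12/46080))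
        = (142699/597871125000 : ℝ) * z^1 * (3 - z^2)^14 + (3173669/1195742250000 : ℝ) * z^3 * (3 - z^2)^13 + (1831831/132860250000 : ℝ) * z^5 * (3 - z^2)^12 + (185492533/4185097875000 : ℝ) * z^7 * (3 - z^2)^11 + (10301206/104627446875 : ℝ) * z^9 * (3 - z^2)^10 + (4904831209/30690717750000 : ℝ) * z^11 * (3 - z^2)^9 + (1012586143/5181549750000 : ℝ) * z^13 * (3 - z^2)^8 + (2042380101413/11171421261000000 : ℝ) * z^15 * (3 - z^2)^7 + (6961728918869/52960811904000000 : ℝ) * z^17 * (3 - z^2)^6 + (30990262495259/428982576422400000 : ℝ) * z^19 * (3 - z^2)^5 + (255849133404379/8579651528448000000 : ℝ) * z^21 * (3 - z^2)^4 + (23394806716727/2621560189248000000 : ℝ) * z^23 * (3 - z^2)^3 + (5461542645913999/3020037338013696000000 : ℝ) * z^25 * (3 - z^2)^2 + (1057705720383593/4907560674272256000000 : ℝ) * z^27 * (3 - z^2)^1 + (54774275204263/5234731385890406400000 : ℝ) * z^29 := by ring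
    have hsum : (0:ℝ) ≤ (142699/597871125000 : ℝ) * z^1 * (3 - z^2)^14 + (3173669/1195742250000 : ℝ) * z^3 * (3 - z^2)^13 + (1831831/132860250000 : ℝ) * z^5 * (3 - z^2)^12 + (185492533/4185097875000 : ℝ) * z^7 * (3 - z^2)^11 + (10301206/104627446875 : ℝ) * z^9 * (3 - z^2)^10 + (4904831209/30690717750000 : ℝ) * z^11 * (3 - z^2)^9 + (1012586143/5181549750000 : ℝ) * z^13 * (3 - z^2)^8 + (2042380101413/11171421261000000 : ℝ) * z^15 * (3 - z^2)^7 + (6961728918869/52960811904000000 : ℝ) * z^17 * (3 - z^2)^6 + (30990262495259/428982576422400000 : ℝ) * z^19 * (3 - z^2)^5 + (255849133404379/8579651528448000000 : ℝ) * z^21 * (3 - z^2)^4 + (23394806716727/2621560189248000000 : ℝ) * z^23 * (3 - z^2)^3 + (5461542645913999/3020037338013696000000 : ℝ) * z^25 * (3 - z^2)^2 + (1057705720383593/4907560674272256000000 : ℝ) * z^27 * (3 - z^2)^1 + (54774275204263/5234731385890406400000 : ℝ) * z^29 := by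
      linarith [mul_nonneg (mul_nonneg (by norm_num : (0:ℝ) ≤ 142699/597871125000) (pow_nonneg hz 1)) (pow_nonneg h30 14),
        mul_nonneg (mul_nonneg (by norm_num : (0:ℝ) ≤ 3173669/1195742250000) (pow_nonneg hz 3)) (pow_nonneg h30 13),
        mul_nonneg (mul_nonneg (by norm_num : (0:ℝ) ≤ 1831831/132860250000) (pow_nonneg hz 5)) (pow_nonneg h30 12),
        mul_nonneg (mul_nonneg (by norm_num : (0:ℝ) ≤ 185492533/4185097875000) (pow_nonneg hz 7)) (pow_nonneg h30 11),
        mul_nonneg (mul_nonneg (by norm_num : (0:ℝ) ≤ 10301206/104627446875) (pow_nonneg hz 9)) (pow_nonneg h30 10),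
        mul_nonneg (mul_nonneg (by norm_num : (0:ℝ) ≤ 4904831209/30690717750000) (pow_nonneg hz 11)) (pow_nonneg h30 9),
        mul_nonneg (mul_nonneg (by norm_num : (0:ℝ) ≤ 1012586143/5181549750000) (pow_nonneg hz 13)) (pow_nonneg h30 8),
        mul_nonneg (mul_nonneg (by norm_num : (0:ℝ) ≤ 2042380101413/11171421261000000) (pow_nonneg hz 15)) (pow_nonneg h30 7),
        mul_nonneg (mul_nonneg (by norm_num : (0:ℝ) ≤ 6961728918869/52960811904000000) (pow_nonneg hz 17)) (pow_nonneg h30 6),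
        mul_nonneg (mul_nonneg (by norm_num : (0:ℝ) ≤ 30990262495259/428982576422400000) (pow_nonneg hz 19)) (pow_nonneg h30 5),
        mul_nonneg (mul_nonneg (by norm_num : (0:ℝ) ≤ 255849133404379/8579651528448000000) (pow_nonneg hz 21)) (pow_nonneg h30 4),
        mul_nonneg (mul_nonneg (by norm_num : (0:ℝ) ≤ 23394806716727/2621560189248000000) (pow_nonneg hz 23)) (pow_nonneg h30 3),
        mul_nonneg (mul_nonneg (by norm_num : (0:ℝ) ≤ 5461542645913999/3020037338013696000000) (pow_nonneg hz 25)) (pow_nonneg h30 2),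
        mul_nonneg (mul_nonneg (by norm_num : (0:ℝ) ≤ 1057705720383593/4907560674272256000000) (pow_nonneg hz 27)) (pow_nonneg h30 1),
        mul_nonneg (by norm_num : (0:ℝ) ≤ 54774275204263/5234731385890406400000) (pow_nonneg hz 29)]
    have hkey : (z*(2+z^2))*(z - z^3/6 + z^5/40 - z^7/336 + z^9/3456 - z^11/42240 + z^13/599040)^2 + 2*(1+z^2)*((z - z^3/6 + z^5/40 - z^7/336 + z^9/3456 - z^11/42240 + z^13/599040)*(1 - z^2/2 + z^4/8 - z^6/48 + z^8/384 - z^10/3840 + z^12/46080))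
        ≤ (3141592/1000000 : ℝ) * (z*(2+z^2))/2 := by linarith [cert, hsum]
    have hXpi : (z*(2+z^2))*(z - z^3/6 + z^5/40 - z^7/336 + z^9/3456 - z^11/42240 + z^13/599040)^2 + 2*(1+z^2)*((z - z^3/6 + z^5/40 - z^7/336 + z^9/3456 - z^11/42240 + z^13/599040)*(1 - z^2/2 + z^4/8 - z^6/48 + z^8/384 - z^10/3840 + z^12/46080))
        ≤ Real.pi * (z*(2+z^2))/2 := by
      have hm : (0:ℝ) ≤ (Real.pi - 3141592/1000000) * (z*(2+z^2)/2) :=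
        mul_nonneg (by linarith) (by positivity)
      linarith [hkey, hm]
    have hB : c^2 * ((z*(2+z^2))*(z - z^3/6 + z^5/40 - z^7/336 + z^9/3456 - z^11/42240 + z^13/599040)^2 + 2*(1+z^2)*((z - z^3/6 + z^5/40 - z^7/336 + z^9/3456 - z^11/42240 + z^13/599040)*(1 - z^2/2 + z^4/8 - z^6/48 + z^8/384 - z^10/3840 + z^12/46080))) ≤ z*(2+z^2)/4 := by
      have e1 : c^2 * (Real.pi * (z*(2+z^2))/2) = (c^2*(2*Real.pi)) * (z*(2+z^2))/4 := by ring
      have e2 := mul_le_mul_of_nonneg_left hXpi (sq_nonneg c)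
      rw [e1, hc2] at e2
      linarith
    have expand : z * (2 + z ^ 2) * Phi z * (1 - Phi z) - (1 + z ^ 2) * (2 * Phi z - 1) * phi z
        = z*(2+z^2)/4 - (z*(2+z^2)*J^2 + 2*(1+z^2)*(J*phi z)) := by rw [hPhi]; ring
    have final : z*(2+z^2)*J^2 + 2*(1+z^2)*(J*phi z) ≤ z*(2+z^2)/4 := by linarith [hA1, hA2, hB]
    linarith [expand, final]
  · -- large z case
    push_neg at h3
    have h3' : (3:ℝ) ≤ z^2 := h3.le
    have tb := tail_bound z hz
    have hD : (0:ℝ) < z^4 + 6*z^2 + 3 := by positivity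
    have hN : (0:ℝ) ≤ z^3 + 5*z := by positivity
    have hQ0 : 0 ≤ 1 - Phi z := by nlinarith [mul_nonneg hN hphi.le]
    have thr : (1+z^2)*(z^4+6*z^2+3) ≤ z*(2+z^2)*(z^3+5*z) := by nlinarith
    have key : (1 + z^2) * (2 * Phi z - 1) * phi z * (z^4+6*z^2+3)
        ≤ z * (2 + z^2) * Phi z * (1 - Phi z) * (z^4+6*z^2+3) := by
      have t1 : z*(2+z^2)*Phi z * ((z^3+5*z)*phi z) ≤ z*(2+z^2)*Phi z * ((1-Phi z)*(z^4+6*z^2+3)) :=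
        mul_le_mul_of_nonneg_left tb (by positivity)
      have s1 : (1+z^2)*(z^4+6*z^2+3) * (Phi z * phi z) ≤ z*(2+z^2)*(z^3+5*z) * (Phi z * phi z) :=
        mul_le_mul_of_nonneg_right thr (by positivity)
      have q1 : 0 ≤ (1+z^2) * ((1 - Phi z) * phi z * (z^4+6*z^2+3)) := by positivity
      nlinarith [t1, s1, q1]
    exact le_of_mul_le_mul_right key hD
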